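/- Let v, v', w, w' ∈ ℝ^{2p} satisfy w'ᵀv = 0, wᵀv' = 0, and ω(v,v') = 0. Then the matrix commutator satisfies U(v,w)·U(v',w') − U(v',w')·U(v,w) = ω(w,w')·U_Z(v,v'). -/

import Mathlib

open Matrix

/-- Index type for `2p × 2p` matrices. -/
abbrev Idx (p : ℕ) := Fin p ⊕ Fin p

/-- The standard symplectic matrix `J = [[0, I], [-I, 0]]`. -/
def Jmat (p : ℕ) : Matrix (Idx p) (Idx p) ℝ := Matrix.fromBlocks 0 1 (-1) 0

/-- The standard symplectic form `ω(v,w) = vᵀJw`. -/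
def omegaForm (p : ℕ) (v w : Idx p → ℝ) : ℝ := v ⬝ᵥ (Jmat p *ᵥ w)

/-- `U(v,w)`: the matrix of the linear map `z ↦ (wᵀz)v + (vᵀJz)(Jw)`,
the nilpotent part of `u(v,w) = I + U(v,w)`. -/
def Unil (p : ℕ) (v w : Idx p → ℝ) : Matrix (Idx p) (Idx p) ℝ :=
  vecMulVec v w + vecMulVec (Jmat p *ᵥ w) (v ᵥ* Jmat p)

/-- `U_Z(v,w)`: the matrix of the linear map `z ↦ ω(v,z)w + ω(w,z)v`,
the nilpotent part of `u_Z(v,w) = I + U_Z(v,w)`. -/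
def UZnil (p : ℕ) (v w : Idx p → ℝ) : Matrix (Idx p) (Idx p) ℝ :=
  vecMulVec w (v ᵥ* Jmat p) + vecMulVec v (w ᵥ* Jmat p)

lemma vecMulVec_mul_vecMulVec (p : ℕ) (a b c d : Idx p → ℝ) :
    vecMulVec a b * vecMulVec c d = (b ⬝ᵥ c) • vecMulVec a d := by
  ext i j
  simp only [mul_apply, vecMulVec_apply, Matrix.smul_apply, smul_eq_mul, dotProduct,
    Finset.sum_mul]
  exact Finset.sum_congr rfl fun k _ => by ring

lemma Jmat_mul_Jmat (p : ℕ) : Jmat p * Jmat p = -1 := by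
  rw [Jmat, Matrix.fromBlocks_multiply]
  simp only [Matrix.zero_mul, Matrix.mul_neg, Matrix.one_mul, Matrix.neg_mul,
    zero_add, add_zero, neg_zero, mul_zero, Matrix.mul_one]
  rw [← neg_zero, ← Matrix.fromBlocks_neg, ← Matrix.fromBlocks_one]

lemma Jmat_transpose (p : ℕ) : (Jmat p)ᵀ = -(Jmat p) := by
  rw [Jmat, Matrix.fromBlocks_transpose, Matrix.fromBlocks_neg]
  simp

lemma mulVec_Jmat (p : ℕ) (b : Idx p → ℝ) :
    Jmat p *ᵥ b = -(b ᵥ* Jmat p) := by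
  rw [← Matrix.vecMul_transpose, Jmat_transpose, Matrix.vecMul_neg]

lemma J_skew_dot (p : ℕ) (a b : Idx p → ℝ) :
    a ⬝ᵥ (Jmat p *ᵥ b) = -(b ⬝ᵥ (Jmat p *ᵥ a)) := by
  rw [mulVec_Jmat p b, dotProduct_neg, dotProduct_comm, dotProduct_mulVec]

lemma vecMulJ_dot_J (p : ℕ) (a b : Idx p → ℝ) :
    (a ᵥ* Jmat p) ⬝ᵥ (Jmat p *ᵥ b) = -(a ⬝ᵥ b) := by
  rw [dotProduct_mulVec, vecMul_vecMul, Jmat_mul_Jmat, Matrix.vecMul_neg,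
    Matrix.vecMul_one, neg_dotProduct]

/-- if `w'ᵀv = 0`, `wᵀv' = 0` and `ω(v,v') = 0`, then the matrix
commutator satisfies `U(v,w)·U(v',w') − U(v',w')·U(v,w) = ω(w,w')·U_Z(v,v')`. -/
theorem matrix_commutator_Unil (p : ℕ) (hp : 1 ≤ p) (v v' w w' : Idx p → ℝ)
    (h1 : w' ⬝ᵥ v = 0) (h2 : w ⬝ᵥ v' = 0) (h3 : omegaForm p v v' = 0) :
    Unil p v w * Unil p v' w' - Unil p v' w' * Unil p v w =
      omegaForm p w w' • UZnil p v v' := by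
  have hC : (v ᵥ* Jmat p) ⬝ᵥ v' = 0 := (dotProduct_mulVec v (Jmat p) v').symm.trans h3
  have hD : (v ᵥ* Jmat p) ⬝ᵥ (Jmat p *ᵥ w') = 0 := by
    rw [vecMulJ_dot_J, dotProduct_comm, h1, neg_zero]
  have hF : w' ⬝ᵥ (Jmat p *ᵥ w) = -(w ⬝ᵥ (Jmat p *ᵥ w')) := J_skew_dot p w' w
  have hG : (v' ᵥ* Jmat p) ⬝ᵥ v = 0 := by
    rw [← dotProduct_mulVec, J_skew_dot]
    unfold omegaForm at h3
    rw [h3, neg_zero]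
  have hH : (v' ᵥ* Jmat p) ⬝ᵥ (Jmat p *ᵥ w) = 0 := by
    rw [vecMulJ_dot_J, dotProduct_comm, h2, neg_zero]
  simp only [Unil, UZnil, omegaForm, add_mul, mul_add, vecMulVec_mul_vecMulVec,
    h1, h2, hC, hD, hF, hG, hH, zero_smul, add_zero, zero_add, neg_smul, smul_add]
  abel
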